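/- Suppose (instead of s ≠ 0) that αβ + βγ + γα = 0, i.e. P lies on the Steiner circumellipse of ABC (so the isotomic conjugate of P is an infinite point). Then the point Z := G + (1/3)(T_P(G) − G), one-third of the way from G to G₁ = T_P(G), satisfies T_{P'}(T_P⁻¹(Z)) = Z, and Z is the unique point of ℝ² fixed by the affine map λ = T_{P'} ∘ T_P⁻¹. -/

import Mathlib

set_option maxHeartbeats 2000000
noncomputable section

abbrev Pt := EuclideanSpace ℝ (Fin 2)

private lemma comb (f : Pt ≃ᵃ[ℝ] Pt) (A B C : Pt) (a b c : ℝ) (h : a + b + c = 1) :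
    f (a • A + b • B + c • C) = a • f A + b • f B + c • f C := by
  have ha : a = 1 - b - c := by linarith
  subst ha
  have h1 : (1 - b - c) • A + b • B + c • C = (b • (B - A) + c • (C - A)) +ᵥ A := by
    simp only [vadd_eq_add]; module
  rw [h1, f.map_vadd]
  have h2 : f.linear (B - A) = f B - f A := by
    simpa using f.toAffineMap.linearMap_vsub B A
  have h3 : f.linear (C - A) = f C - f A := by
    simpa using f.toAffineMap.linearMap_vsub C A
  simp only [map_add, map_smul, h2, h3, vadd_eq_add]
  module

theorem stmt19
    (A B C : Pt) (hABC : AffineIndependent ℝ ![A, B, C])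
    (α β γ : ℝ) (hsum : α + β + γ = 1)
    (hα : α ≠ 0) (hβ : β ≠ 0) (hγ : γ ≠ 0)
    (hβγ : β + γ ≠ 0) (hγα : γ + α ≠ 0) (hαβ : α + β ≠ 0)
    (hab : α ≠ β) (hbc : β ≠ γ) (hca : γ ≠ α)
    (hs : α * β + β * γ + γ * α = 0)
    (G : Pt) (hG : G = (3:ℝ)⁻¹ • (A + B + C))
    (P : Pt) (hP : P = α • A + β • B + γ • C)
    (D E F : Pt)
    (hD : D = (β + γ)⁻¹ • (β • B + γ • C))
    (hE : E = (γ + α)⁻¹ • (α • A + γ • C))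
    (hF : F = (α + β)⁻¹ • (α • A + β • B))
    (D₃ E₃ F₃ : Pt)
    (hD₃ : D₃ = (β + γ)⁻¹ • (γ • B + β • C))
    (hE₃ : E₃ = (γ + α)⁻¹ • (γ • A + α • C))
    (hF₃ : F₃ = (α + β)⁻¹ • (β • A + α • B))
    (TP : Pt ≃ᵃ[ℝ] Pt) (hTPA : TP A = D) (hTPB : TP B = E) (hTPC : TP C = F)
    (TP' : Pt ≃ᵃ[ℝ] Pt) (hTP'A : TP' A = D₃) (hTP'B : TP' B = E₃) (hTP'C : TP' C = F₃)

    (Z : Pt) (hZ : Z = G + (3:ℝ)⁻¹ • (TP G - G)) :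
    TP' (TP.symm Z) = Z ∧ ∀ R : Pt, TP' (TP.symm R) = R → R = Z := by
  have hab' : α - β ≠ 0 := sub_ne_zero.mpr hab
  have hbc' : β - γ ≠ 0 := sub_ne_zero.mpr hbc
  have hca' : γ - α ≠ 0 := sub_ne_zero.mpr hca
  -- linear independence of B-A, C-A
  have hli : LinearIndependent ℝ ![B - A, C - A] := by
    have h0 := (affineIndependent_iff_linearIndependent_vsub ℝ ![A, B, C] 0).mp hABC
    have hinj : Function.Injective
        (![⟨1, by decide⟩, ⟨2, by decide⟩] : Fin 2 → {x : Fin 3 // x ≠ 0}) := by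
      intro i j hij; fin_cases i <;> fin_cases j <;> simp_all
    have h1 := h0.comp _ hinj
    convert h1 using 1
    ext i; fin_cases i <;> simp [vsub_eq_sub]
    rfl
  have hkey : ∀ x y : ℝ, x • (B - A) + y • (C - A) = 0 → x = 0 ∧ y = 0 :=
    fun x y h => LinearIndependent.pair_iff.mp hli x y h
  -- Z as a combination of A, B, C via TP G
  have hG' : G = (3:ℝ)⁻¹ • A + (3:ℝ)⁻¹ • B + (3:ℝ)⁻¹ • C := by rw [hG]; module
  have hTPG : TP G = (3:ℝ)⁻¹ • D + (3:ℝ)⁻¹ • E + (3:ℝ)⁻¹ • F := by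
    rw [hG', comb TP A B C _ _ _ (by norm_num), hTPA, hTPB, hTPC]
  -- the fixed point upstairs
  set k : ℝ := (9 * (α * β * γ))⁻¹ with hk
  set a : ℝ := (β + γ) * (γ - α) * (α - β) * k with ha
  set b : ℝ := (γ + α) * (α - β) * (β - γ) * k with hb
  set c : ℝ := (α + β) * (β - γ) * (γ - α) * k with hc
  have habc : a + b + c = 1 := by
    rw [ha, hb, hc, hk]
    field_simp
    linear_combination (((-1:ℝ))) * hs + (((-1:ℝ)*β*γ)+((-1:ℝ)*α*γ)+((-1:ℝ)*α*β)) * hsum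
  have hSval : TP (a • A + b • B + c • C) = Z := by
    rw [comb TP A B C a b c habc, hTPA, hTPB, hTPC, hZ, hTPG, hG', hD, hE, hF,
      ha, hb, hc, hk]
    match_scalars
    · field_simp
      linear_combination ((-9:ℝ)*α*β+(9:ℝ)*α*α*β+(-9:ℝ)*α*γ+(9:ℝ)*α*α*γ+(-9:ℝ)*β*γ+(-9:ℝ)*α*γ*γ+(-9:ℝ)*β*γ*γ) * hsum + ((-9:ℝ)+(18:ℝ)*α+(-18:ℝ)*α*α+(9:ℝ)*β+(-18:ℝ)*α*β) * hs
    · field_simp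
      linear_combination ((-9:ℝ)*α*α*β+(-9:ℝ)*α*β*β+(-9:ℝ)*α*α*γ+(-18:ℝ)*α*β*γ+(-9:ℝ)*β*β*γ) * hsum + ((-9:ℝ)*α+(-9:ℝ)*β+(18:ℝ)*α*β) * hs
    · field_simp
      linear_combination ((-9:ℝ)*α*β+(9:ℝ)*α*β*β+(-9:ℝ)*α*γ+(-9:ℝ)*β*γ+(9:ℝ)*β*β*γ+(-9:ℝ)*α*γ*γ+(-9:ℝ)*β*γ*γ) * hsum + ((-9:ℝ)+(9:ℝ)*α+(18:ℝ)*β+(-18:ℝ)*α*β+(-18:ℝ)*β*β) * hs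
  have hSval' : TP' (a • A + b • B + c • C) = Z := by
    rw [comb TP' A B C a b c habc, hTP'A, hTP'B, hTP'C, hZ, hTPG, hG',
      hD, hE, hF, hD₃, hE₃, hF₃, ha, hb, hc, hk]
    match_scalars
    · field_simp
      linear_combination ((-9:ℝ)*α*β*β+(9:ℝ)*α*α*β*β+(-9:ℝ)*α*β*γ+(9:ℝ)*α*α*β*γ+(-9:ℝ)*β*β*γ+(-9:ℝ)*α*β*γ*γ+(-9:ℝ)*β*β*γ*γ) * hsum + ((-9:ℝ)*β+(18:ℝ)*α*β+(-18:ℝ)*α*α*β+(9:ℝ)*β*β+(-18:ℝ)*α*β*β) * hs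
    · field_simp
      linear_combination ((-9:ℝ)*α*α*β+(-9:ℝ)*α*β*β+(18:ℝ)*α*α*β*β+(-9:ℝ)*α*α*γ+(-18:ℝ)*α*β*γ+(9:ℝ)*α*α*β*γ+(-9:ℝ)*β*β*γ+(9:ℝ)*α*β*β*γ+(-9:ℝ)*α*α*γ*γ+(-18:ℝ)*α*β*γ*γ+(-9:ℝ)*β*β*γ*γ) * hsum + ((-9:ℝ)*α+(9:ℝ)*α*α+(-9:ℝ)*β+(36:ℝ)*α*β+(-18:ℝ)*α*α*β+(9:ℝ)*β*β+(-18:ℝ)*α*β*β) * hs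
    · field_simp
      linear_combination ((-9:ℝ)*α*α*β+(9:ℝ)*α*α*β*β+(-9:ℝ)*α*α*γ+(-9:ℝ)*α*β*γ+(9:ℝ)*α*β*β*γ+(-9:ℝ)*α*α*γ*γ+(-9:ℝ)*α*β*γ*γ) * hsum + ((-9:ℝ)*α+(9:ℝ)*α*α+(18:ℝ)*α*β+(-18:ℝ)*α*α*β+(-18:ℝ)*α*β*β) * hs
  have hsymmZ : TP.symm Z = a • A + b • B + c • C := by
    rw [← hSval, AffineEquiv.symm_apply_apply]
  have hfix : TP' (TP.symm Z) = Z := by rw [hsymmZ, hSval']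
  refine ⟨hfix, ?_⟩
  intro R hR
  -- set up linear parts
  have hlinTP : ∀ X Y : Pt, TP.linear (X - Y) = TP X - TP Y := by
    intro X Y; simpa using TP.toAffineMap.linearMap_vsub X Y
  have hlinTP' : ∀ X Y : Pt, TP'.linear (X - Y) = TP' X - TP' Y := by
    intro X Y; simpa using TP'.toAffineMap.linearMap_vsub X Y
  set w : Pt := TP.symm R - TP.symm Z with hw
  have hlw : TP.linear w = R - Z := by
    rw [hw, hlinTP, AffineEquiv.apply_symm_apply, AffineEquiv.apply_symm_apply]
  have hlw' : TP'.linear w = R - Z := by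
    rw [hw, hlinTP', hR, hfix]
  -- write w in the basis B-A, C-A
  obtain ⟨s, t, hwst⟩ : ∃ s t : ℝ, w = s • (B - A) + t • (C - A) := by
    have hcard : Fintype.card (Fin 2) = Module.finrank ℝ Pt := by
      simp [finrank_euclideanSpace]
    let bas := basisOfLinearIndependentOfCardEqFinrank hli hcard
    refine ⟨bas.repr w 0, bas.repr w 1, ?_⟩
    have hrepr := bas.sum_repr w
    rw [Fin.sum_univ_two] at hrepr
    have hb0 : bas 0 = B - A := by
      simp [bas, coe_basisOfLinearIndependentOfCardEqFinrank]
    have hb1 : bas 1 = C - A := by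
      simp [bas, coe_basisOfLinearIndependentOfCardEqFinrank]
    rw [hb0, hb1] at hrepr
    exact hrepr.symm
  have e1 : TP.linear (B - A) = E - D := by rw [hlinTP, hTPB, hTPA]
  have e2 : TP.linear (C - A) = F - D := by rw [hlinTP, hTPC, hTPA]
  have e1' : TP'.linear (B - A) = E₃ - D₃ := by rw [hlinTP', hTP'B, hTP'A]
  have e2' : TP'.linear (C - A) = F₃ - D₃ := by rw [hlinTP', hTP'C, hTP'A]
  have heq : s • (E₃ - D₃) + t • (F₃ - D₃) = s • (E - D) + t • (F - D) := by
    calc s • (E₃ - D₃) + t • (F₃ - D₃) = TP'.linear w := by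
          rw [hwst, map_add, map_smul, map_smul, e1', e2']
      _ = R - Z := hlw'
      _ = TP.linear w := hlw.symm
      _ = s • (E - D) + t • (F - D) := by
          rw [hwst, map_add, map_smul, map_smul, e1, e2]
  set u : ℝ := (β - γ) / (β + γ) with hu
  set v : ℝ := (γ - α) / (γ + α) with hv
  set wc : ℝ := (α - β) / (α + β) with hwc
  have hK : u * v + u * wc + v * wc = -9 := by
    rw [hu, hv, hwc]
    field_simp
    linear_combination ((8:ℝ)*α*β+(8:ℝ)*α*γ+(8:ℝ)*β*γ) * hsum + ((8:ℝ)) * hs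
  have hcomb : (s • (E₃ - D₃) + t • (F₃ - D₃)) - (s • (E - D) + t • (F - D))
      = (s * u + t * (u + wc)) • (B - A) + (-(s * (u + v)) - t * u) • (C - A) := by
    rw [hD, hE, hF, hD₃, hE₃, hF₃, hu, hv, hwc]
    match_scalars <;> field_simp <;> ring
  have hzero : (s * u + t * (u + wc)) • (B - A) + (-(s * (u + v)) - t * u) • (C - A) = 0 := by
    rw [← hcomb, heq]; abel
  obtain ⟨hX, hY⟩ := hkey _ _ hzero
  have hs0 : s = 0 := by
    linear_combination (u / 9) * hX + ((u + wc) / 9) * hY + (s / 9) * hK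
  have ht0 : t = 0 := by
    linear_combination (-(u + v) / 9) * hX + (-u / 9) * hY + (t / 9) * hK
  have hw0 : w = 0 := by rw [hwst, hs0, ht0]; simp
  have : R - Z = 0 := by rw [← hlw, hw0, map_zero]
  have := sub_eq_zero.mp this
  exact this
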